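/- arXiv:2502.20141 — 7 statements merged into one kernel-verified Lean document; each statement's English description precedes it below -/
import Mathlib

section
/- Let B ≥ 1, ε > 0, and let z'_1,…,z'_B and z''_1,…,z''_B be unit vectors in a real inner product space. Define the kernel matrix K by K_{ij} = exp(-(1 - ⟨z'_i, z''_j⟩)/ε) and the row-normalized matrix P by P_{ij} = K_{ij} / Σ_{k=1}^B K_{ik}. Then KL(I ‖ P) = - Σ_{i=1}^B log( exp(⟨z'_i, z''_i⟩/ε) / Σ_{j=1}^B exp(⟨z'_i, z''_j⟩/ε) ), i.e., the KL divergence from the identity matrix to the one-step row-normalized kernel equals the InfoNCE loss. -/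
open BigOperators

/-- KL divergence from the identity matrix to the one-step
row-normalized kernel equals the InfoNCE loss. -/
theorem gca_ince_equivalence
    {E : Type*} [NormedAddCommGroup E] [InnerProductSpace ℝ E]
    (B : ℕ) (hB : 1 ≤ B) (ε : ℝ) (hε : 0 < ε)
    (z₁ z₂ : Fin B → E)
    (hz₁ : ∀ i, ‖z₁ i‖ = 1) (hz₂ : ∀ i, ‖z₂ i‖ = 1)
    (K P : Matrix (Fin B) (Fin B) ℝ)
    (hK : ∀ i j, K i j = Real.exp (-(1 - (inner ℝ (z₁ i) (z₂ j) : ℝ)) / ε))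
    (hP : ∀ i j, P i j = K i j / ∑ k, K i k) :
    (∑ i, ∑ j,
        ((1 : Matrix (Fin B) (Fin B) ℝ) i j *
            Real.log ((1 : Matrix (Fin B) (Fin B) ℝ) i j / P i j)
          - (1 : Matrix (Fin B) (Fin B) ℝ) i j + P i j))
      = -∑ i, Real.log (Real.exp ((inner ℝ (z₁ i) (z₂ i) : ℝ) / ε)
          / ∑ j, Real.exp ((inner ℝ (z₁ i) (z₂ j) : ℝ) / ε)) := by
  haveI : Nonempty (Fin B) := ⟨⟨0, hB⟩⟩
  have hS : ∀ i, (0:ℝ) < ∑ j, Real.exp ((inner ℝ (z₁ i) (z₂ j) : ℝ) / ε) :=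
    fun i => Finset.sum_pos (fun j _ => Real.exp_pos _) Finset.univ_nonempty
  have hKrw : ∀ i j, K i j
      = Real.exp (-1/ε) * Real.exp ((inner ℝ (z₁ i) (z₂ j) : ℝ) / ε) := by
    intro i j; rw [hK, ← Real.exp_add]; ring_nf
  have hPrw : ∀ i j, P i j
      = Real.exp ((inner ℝ (z₁ i) (z₂ j) : ℝ) / ε)
        / ∑ k, Real.exp ((inner ℝ (z₁ i) (z₂ k) : ℝ) / ε) := by
    intro i j
    rw [hP]
    simp only [hKrw]
    rw [← Finset.mul_sum, mul_div_mul_left _ _ (Real.exp_ne_zero _)]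
  have hPsum : ∀ i, ∑ j, P i j = 1 := by
    intro i
    simp only [hPrw]
    rw [← Finset.sum_div, div_self (hS i).ne']
  have hPpos : ∀ i j, 0 < P i j := by
    intro i j; rw [hPrw]; exact div_pos (Real.exp_pos _) (hS i)
  rw [← Finset.sum_neg_distrib]
  refine Finset.sum_congr rfl fun i _ => ?_
  have hrow : ∀ j, ((1 : Matrix (Fin B) (Fin B) ℝ) i j *
        Real.log ((1 : Matrix (Fin B) (Fin B) ℝ) i j / P i j)
        - (1 : Matrix (Fin B) (Fin B) ℝ) i j + P i j)
      = (if j = i then (-Real.log (P i i) - 1) else 0) + P i j := by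
    intro j
    by_cases h : j = i
    · subst h
      simp [Matrix.one_apply, one_div, Real.log_inv]
    · simp [Matrix.one_apply, Ne.symm h, h]
  calc ∑ j, ((1 : Matrix (Fin B) (Fin B) ℝ) i j *
        Real.log ((1 : Matrix (Fin B) (Fin B) ℝ) i j / P i j)
        - (1 : Matrix (Fin B) (Fin B) ℝ) i j + P i j)
      = ∑ j, ((if j = i then (-Real.log (P i i) - 1) else 0) + P i j) :=
        Finset.sum_congr rfl fun j _ => hrow j
    _ = (-Real.log (P i i) - 1) + 1 := by
        rw [Finset.sum_add_distrib, Finset.sum_ite_eq' _ i, hPsum i]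
        simp
    _ = -Real.log (Real.exp ((inner ℝ (z₁ i) (z₂ i) : ℝ) / ε)
          / ∑ j, Real.exp ((inner ℝ (z₁ i) (z₂ j) : ℝ) / ε)) := by
        rw [hPrw]; ring
end

section
/- Let ε > 0, q ∈ (0,1], λ > 0, B ≥ 1, and let z'_1,…,z'_B and z''_1,…,z''_B be unit vectors in a real inner product space. Set s_{ij} = ⟨z'_i, z''_j⟩/ε, K_{ij} = exp(s_{ij} - 1/ε), u_i = 1 / Σ_{j=1}^B K_{ij} (the one-step Sinkhorn scaling with target marginal 𝟙), and P^{(1)} = diag(u) K. Then for every i, the RINCE loss satisfies (1/q)( -exp(q s_{ii}) + λ^q (Σ_{j=1}^B exp(s_{ij}))^q ) = exp(q/ε) · ( -(1/q) (P^{(1)}_{ii}/u_i)^q + (1/q) (λ/u_i)^q ). In particular the RINCE objective equals, up to the positive constant factor exp(q/ε), the GCA objective -(1/q)(diag(P^{(1)})/u)^q + (1/q)(λ/u)^q evaluated at the one-step Bregman projection P^{(1)}. -/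
open BigOperators

/-- the RINCE loss equals, up to the positive constant factor
`exp(q/ε)`, the GCA objective evaluated at the one-step Bregman projection. -/
theorem rince_equivalence
    {E : Type*} [NormedAddCommGroup E] [InnerProductSpace ℝ E]
    (B : ℕ) (hB : 1 ≤ B) (ε q lam : ℝ)
    (hε : 0 < ε) (hq : 0 < q) (hq1 : q ≤ 1) (hlam : 0 < lam)
    (z₁ z₂ : Fin B → E)
    (hz₁ : ∀ i, ‖z₁ i‖ = 1) (hz₂ : ∀ i, ‖z₂ i‖ = 1)
    (s : Matrix (Fin B) (Fin B) ℝ)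
    (hs : ∀ i j, s i j = (inner ℝ (z₁ i) (z₂ j) : ℝ) / ε)
    (K : Matrix (Fin B) (Fin B) ℝ)
    (hK : ∀ i j, K i j = Real.exp (s i j - 1 / ε))
    (u : Fin B → ℝ) (hu : ∀ i, u i = 1 / ∑ j, K i j)
    (P1 : Matrix (Fin B) (Fin B) ℝ)
    (hP1 : ∀ i j, P1 i j = u i * K i j) :
    ∀ i, (1 / q) * (-Real.exp (q * s i i)
            + lam ^ q * (∑ j, Real.exp (s i j)) ^ q)
      = Real.exp (q / ε) *
          (-(1 / q) * (P1 i i / u i) ^ q + (1 / q) * (lam / u i) ^ q) := by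
  intro i
  have hBne : Nonempty (Fin B) := Fin.pos_iff_nonempty.mp hB
  -- sum of K row
  have hKsum : ∑ j, K i j = Real.exp (-(1 / ε)) * ∑ j, Real.exp (s i j) := by
    rw [Finset.mul_sum]
    refine Finset.sum_congr rfl fun j _ => ?_
    rw [hK, sub_eq_add_neg, add_comm, Real.exp_add]
  have hSpos : 0 < ∑ j, Real.exp (s i j) :=
    Finset.sum_pos (fun j _ => Real.exp_pos _) Finset.univ_nonempty
  have hKspos : 0 < ∑ j, K i j := by rw [hKsum]; positivity
  have hui : u i = 1 / ∑ j, K i j := hu i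
  have huine : u i ≠ 0 := by rw [hui]; positivity
  have hdiag : P1 i i / u i = K i i := by
    rw [hP1, mul_comm, mul_div_assoc, div_self huine, mul_one]
  have hlamu : lam / u i = lam * ∑ j, K i j := by
    rw [hui]; field_simp
  rw [hdiag, hlamu, hK, hKsum]
  have h1 : (Real.exp (s i i - 1 / ε)) ^ q = Real.exp (q * s i i) * Real.exp (-(q / ε)) := by
    rw [← Real.exp_mul, ← Real.exp_add]; ring_nf
  have h2 : (lam * (Real.exp (-(1 / ε)) * ∑ j, Real.exp (s i j))) ^ q
      = lam ^ q * (Real.exp (-(q / ε)) * (∑ j, Real.exp (s i j)) ^ q) := by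
    rw [Real.mul_rpow hlam.le (by positivity),
        Real.mul_rpow (Real.exp_pos _).le hSpos.le, ← Real.exp_mul]
    ring_nf
  rw [h1, h2]
  have he : Real.exp (q / ε) * Real.exp (-(q / ε)) = 1 := by
    rw [← Real.exp_add]; simp
  field_simp
  ring_nf
  simp [mul_assoc, ← Real.exp_add]
end

section
/- Let K be an n×m matrix with strictly positive entries and let v, v' ∈ ℝ^m be strictly positive vectors. Define η(K) = max_{i,j,k,ℓ} ( K_{ik} K_{jℓ} ) / ( K_{jk} K_{iℓ} ) and λ(K) = ( √(η(K)) - 1 ) / ( √(η(K)) + 1 ) < 1. Then d_H(Kv, Kv') ≤ λ(K) · d_H(v, v'), where d_H is the Hilbert projective metric. -/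
open BigOperators

/-- Hilbert projective metric on strictly positive vectors:
`d_H(u, u') = log max_{i,j} (u_i u'_j)/(u_j u'_i)`. -/
noncomputable def hilbertDist {n : ℕ} (u u' : Fin n → ℝ) : ℝ :=
  Real.log (⨆ p : Fin n × Fin n, (u p.1 * u' p.2) / (u p.2 * u' p.1))

/-- `η(K) = max_{i,j,k,ℓ} (K_{ik} K_{jℓ})/(K_{jk} K_{iℓ})`. -/
noncomputable def etaK {n m : ℕ} (K : Matrix (Fin n) (Fin m) ℝ) : ℝ :=
  ⨆ p : (Fin n × Fin n) × Fin m × Fin m,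
    (K p.1.1 p.2.1 * K p.1.2 p.2.2) / (K p.1.2 p.2.1 * K p.1.1 p.2.2)

/-- `λ(K) = (√η(K) - 1)/(√η(K) + 1)`. -/
noncomputable def lamK {n m : ℕ} (K : Matrix (Fin n) (Fin m) ℝ) : ℝ :=
  (Real.sqrt (etaK K) - 1) / (Real.sqrt (etaK K) + 1)

lemma core_alg' {x y U W P Q : ℝ} (hx : 1 ≤ x) (hy : 1 ≤ y)
    (hP : 0 < P) (hQ : 0 < Q) (hU : 0 ≤ U) (hW : 0 ≤ W)
    (hU' : U ≤ (x^2 - 1) * P) (hW' : W ≤ (x^2 - 1) * Q)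
    (hC : U * ((x^2 - 1) * Q - W) ≤ y^2 * (W * ((x^2 - 1) * P - U))) :
    (P + U) * Q * (x + y)^2 ≤ (1 + x*y)^2 * ((Q + W) * P) := by
  rcases eq_or_lt_of_le hx with h1 | h1
  · have hx2 : x^2 - 1 = 0 := by rw [← h1]; ring
    have hU0 : U = 0 := le_antisymm (by rw [hx2] at hU'; simpa using hU') hU
    have hW0 : W = 0 := le_antisymm (by rw [hx2] at hW'; simpa using hW') hW
    subst hU0; subst hW0; subst h1
    exact le_of_eq (by ring)
  · have hM : 0 < (x^2 - 1) * Q - W + y^2 * W := by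
      nlinarith [mul_pos (show (0:ℝ) < x^2 - 1 by nlinarith) hQ,
        mul_nonneg (show (0:ℝ) ≤ y^2 - 1 by nlinarith) hW]
    have hCC : 0 ≤ y^2 * (W * ((x^2-1)*P - U)) - U * ((x^2-1)*Q - W) := sub_nonneg.2 hC
    have key : 0 ≤ ((1 + x*y)^2 * ((Q + W) * P) - (P + U) * Q * (x + y)^2)
        * ((x^2 - 1) * Q - W + y^2 * W) := by
      nlinarith [mul_nonneg (mul_nonneg (sq_nonneg (x+y)) hQ.le) hCC,
        mul_nonneg (mul_nonneg (by nlinarith : (0:ℝ) ≤ y^2 - 1) hP.le)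
          (sq_nonneg ((x^2-1)*Q - W - x*y*W))]
    nlinarith [key, hM]

lemma log_core {y : ℝ} (hy : 1 ≤ y) {x : ℝ} (hx : 1 ≤ x) :
    Real.log (1 + x*y) - Real.log (x + y) ≤ (y - 1)/(y + 1) * Real.log x := by
  set c : ℝ := (y - 1)/(y + 1) with hc
  have hy0 : (0:ℝ) < y := lt_of_lt_of_le one_pos hy
  set f : ℝ → ℝ := fun s => c * Real.log s + Real.log (s + y) - Real.log (1 + s*y) with hf
  have hderiv : ∀ s ∈ Set.Ioi (1:ℝ),
      HasDerivAt f (c * s⁻¹ + (s + y)⁻¹ - (1 + s*y)⁻¹ * y) s := by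
    intro s hs
    have hs0 : (0:ℝ) < s := lt_trans one_pos hs
    have h2 : (0:ℝ) < s + y := by linarith
    have h3 : (0:ℝ) < 1 + s*y := by nlinarith
    have d1 : HasDerivAt (fun s : ℝ => c * Real.log s) (c * s⁻¹) s :=
      (Real.hasDerivAt_log hs0.ne').const_mul c
    have d2 : HasDerivAt (fun s : ℝ => Real.log (s + y)) ((s + y)⁻¹ * 1) s :=
      by have := (Real.hasDerivAt_log h2.ne').comp s ((hasDerivAt_id s).add_const y); exact this
    have d3 : HasDerivAt (fun s : ℝ => Real.log (1 + s*y)) ((1 + s*y)⁻¹ * (1*y)) s :=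
      by have := (Real.hasDerivAt_log h3.ne').comp s (((hasDerivAt_id s).mul_const y).const_add 1); exact this
    have := (d1.add d2).sub d3
    exact this.congr_deriv (by simp only [mul_one, one_mul])
  have hmono : MonotoneOn f (Set.Ici (1:ℝ)) := by
    apply monotoneOn_of_deriv_nonneg (convex_Ici 1)
    · apply ContinuousOn.sub (ContinuousOn.add ?_ ?_) ?_
      · exact (continuousOn_id.log (fun s hs => by
          have : (1:ℝ) ≤ s := hs; positivity)).const_smul c |>.congr (fun s _ => by
            simp [smul_eq_mul])
      · exact ContinuousOn.log (continuousOn_id.add continuousOn_const)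
          (fun s hs => by have : (1:ℝ) ≤ s := hs; positivity)
      · exact ContinuousOn.log (continuousOn_const.add (continuousOn_id.mul continuousOn_const))
          (fun s hs => by have : (1:ℝ) ≤ s := hs; positivity)
    · intro s hs
      rw [interior_Ici] at hs
      exact ((hderiv s hs).differentiableAt).differentiableWithinAt
    · intro s hs
      rw [interior_Ici] at hs
      rw [(hderiv s hs).deriv]
      have hs0 : (0:ℝ) < s := lt_trans one_pos hs
      have h2 : (0:ℝ) < s + y := by linarith
      have h3 : (0:ℝ) < 1 + s*y := by nlinarith
      have h4 : (0:ℝ) < y + 1 := by linarith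
      have heq : c * s⁻¹ + (s + y)⁻¹ - (1 + s*y)⁻¹ * y
          = (y * (y - 1) * (s - 1)^2) / ((y+1) * s * (s+y) * (1+s*y)) := by
        rw [hc]; field_simp; ring
      rw [heq]
      exact div_nonneg (mul_nonneg (mul_nonneg hy0.le (by linarith)) (sq_nonneg _))
        (by positivity)
  have hf1 : f 1 = 0 := by
    simp [hf, Real.log_one, one_mul, add_comm]
  have := hmono (Set.self_mem_Ici) (show x ∈ Set.Ici (1:ℝ) from hx) hx
  rw [hf1] at this
  simp only [hf] at this
  linarith

lemma sum_bound {m : ℕ} [NeZero m] (A B r : Fin m → ℝ)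
    (hA : ∀ j, 0 < A j) (hB : ∀ j, 0 < B j) {ρ x y : ℝ} (hρ : 0 < ρ)
    (hx : 1 ≤ x) (hy : 1 ≤ y)
    (hr1 : ∀ j, ρ ≤ r j) (hr2 : ∀ j, r j ≤ x^2 * ρ)
    (hη : ∀ j k, A j * B k ≤ y^2 * (A k * B j)) :
    (∑ j, A j * r j) * (∑ j, B j) * (x + y)^2
      ≤ (1 + x*y)^2 * ((∑ j, B j * r j) * (∑ j, A j)) := by
  have hne : (Finset.univ : Finset (Fin m)).Nonempty := Finset.univ_nonempty
  have hSA : 0 < ∑ j, A j := Finset.sum_pos (fun j _ => hA j) hne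
  have hSB : 0 < ∑ j, B j := Finset.sum_pos (fun j _ => hB j) hne
  set U := ∑ j, A j * (r j - ρ) with hUdef
  set W := ∑ j, B j * (r j - ρ) with hWdef
  have eA : ∑ j, A j * r j = ρ * (∑ j, A j) + U := by
    rw [hUdef, Finset.mul_sum, ← Finset.sum_add_distrib]
    exact Finset.sum_congr rfl fun j _ => by ring
  have eB : ∑ j, B j * r j = ρ * (∑ j, B j) + W := by
    rw [hWdef, Finset.mul_sum, ← Finset.sum_add_distrib]
    exact Finset.sum_congr rfl fun j _ => by ring
  have eA' : ∑ j, A j * (x^2*ρ - r j) = (x^2 - 1) * (ρ * ∑ j, A j) - U := by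
    rw [hUdef, Finset.mul_sum, Finset.mul_sum, ← Finset.sum_sub_distrib]
    exact Finset.sum_congr rfl fun j _ => by ring
  have eB' : ∑ j, B j * (x^2*ρ - r j) = (x^2 - 1) * (ρ * ∑ j, B j) - W := by
    rw [hWdef, Finset.mul_sum, Finset.mul_sum, ← Finset.sum_sub_distrib]
    exact Finset.sum_congr rfl fun j _ => by ring
  have hU : 0 ≤ U := Finset.sum_nonneg fun j _ =>
    mul_nonneg (hA j).le (by linarith [hr1 j])
  have hW : 0 ≤ W := Finset.sum_nonneg fun j _ =>
    mul_nonneg (hB j).le (by linarith [hr1 j])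
  have hU' : U ≤ (x^2 - 1) * (ρ * ∑ j, A j) := by
    have h0 : 0 ≤ ∑ j, A j * (x^2*ρ - r j) := Finset.sum_nonneg fun j _ =>
      mul_nonneg (hA j).le (by linarith [hr2 j])
    linarith [eA' ▸ h0]
  have hW' : W ≤ (x^2 - 1) * (ρ * ∑ j, B j) := by
    have h0 : 0 ≤ ∑ j, B j * (x^2*ρ - r j) := Finset.sum_nonneg fun j _ =>
      mul_nonneg (hB j).le (by linarith [hr2 j])
    linarith [eB' ▸ h0]
  have hcross : U * (∑ k, B k * (x^2*ρ - r k)) ≤ y^2 * (W * (∑ k, A k * (x^2*ρ - r k))) := by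
    rw [hUdef, hWdef, Finset.sum_mul_sum, Finset.sum_mul_sum, Finset.mul_sum]
    apply Finset.sum_le_sum
    intro j _
    rw [Finset.mul_sum]
    apply Finset.sum_le_sum
    intro k _
    have h1 : 0 ≤ (r j - ρ) * (x^2*ρ - r k) :=
      mul_nonneg (by linarith [hr1 j]) (by linarith [hr2 k])
    calc A j * (r j - ρ) * (B k * (x^2*ρ - r k))
        = (A j * B k) * ((r j - ρ) * (x^2*ρ - r k)) := by ring
      _ ≤ (y^2 * (A k * B j)) * ((r j - ρ) * (x^2*ρ - r k)) :=
          mul_le_mul_of_nonneg_right (hη j k) h1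
      _ = y^2 * (B j * (r j - ρ) * (A k * (x^2*ρ - r k))) := by ring
  rw [eA', eB'] at hcross
  have key := core_alg' (U := U) (W := W) (P := ρ * ∑ j, A j) (Q := ρ * ∑ j, B j)
    hx hy (by positivity) (by positivity) hU hW hU' hW' hcross
  rw [eA, eB]
  refine le_of_mul_le_mul_left ?_ hρ
  calc ρ * ((ρ * (∑ j, A j) + U) * (∑ j, B j) * (x + y)^2)
      = (ρ * (∑ j, A j) + U) * (ρ * ∑ j, B j) * (x + y)^2 := by ring
    _ ≤ (1 + x*y)^2 * ((ρ * (∑ j, B j) + W) * (ρ * ∑ j, A j)) := key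
    _ = ρ * ((1 + x*y)^2 * ((ρ * (∑ j, B j) + W) * (∑ j, A j))) := by ring

/-- Birkhoff contraction of a positive kernel in the Hilbert
projective metric: `d_H(Kv, Kv') ≤ λ(K) d_H(v, v')`, with `λ(K) < 1`. -/
theorem birkhoff_contraction
    (n m : ℕ) (hn : 0 < n) (hm : 0 < m)
    (K : Matrix (Fin n) (Fin m) ℝ) (hK : ∀ i j, 0 < K i j)
    (v v' : Fin m → ℝ) (hv : ∀ j, 0 < v j) (hv' : ∀ j, 0 < v' j) :
    lamK K < 1 ∧
    hilbertDist (fun i => ∑ j, K i j * v j) (fun i => ∑ j, K i j * v' j)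
      ≤ lamK K * hilbertDist v v' := by
  haveI : NeZero m := ⟨hm.ne'⟩
  haveI : NeZero n := ⟨hn.ne'⟩
  set i0 : Fin n := ⟨0, hn⟩
  set j0 : Fin m := ⟨0, hm⟩
  -- eta facts
  have hbddη : BddAbove (Set.range fun p : (Fin n × Fin n) × Fin m × Fin m =>
      (K p.1.1 p.2.1 * K p.1.2 p.2.2) / (K p.1.2 p.2.1 * K p.1.1 p.2.2)) :=
    Set.Finite.bddAbove (Set.finite_range _)
  have hη1 : 1 ≤ etaK K := by
    have h := le_ciSup hbddη ((i0, i0), (j0, j0))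
    rw [div_self (ne_of_gt (mul_pos (hK i0 j0) (hK i0 j0)))] at h
    exact h
  have hηpair : ∀ i i' k l, K i k * K i' l ≤ etaK K * (K i' k * K i l) := by
    intro i i' k l
    have h := le_ciSup hbddη ((i, i'), (k, l))
    rw [div_le_iff₀ (mul_pos (hK i' k) (hK i l))] at h
    exact h
  set y := Real.sqrt (etaK K) with hydef
  have hy : 1 ≤ y := by
    rw [hydef, show (1:ℝ) = Real.sqrt 1 by simp]
    exact Real.sqrt_le_sqrt hη1
  have hy2 : y^2 = etaK K := Real.sq_sqrt (by linarith)
  have hlam : lamK K = (y - 1)/(y + 1) := rfl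
  have hlam1 : lamK K < 1 := by
    rw [hlam, div_lt_one (by linarith)]; linarith
  refine ⟨hlam1, ?_⟩
  have hlam0 : 0 ≤ lamK K := by
    rw [hlam]; exact div_nonneg (by linarith) (by linarith)
  -- t facts
  have hbddt : BddAbove (Set.range fun p : Fin m × Fin m =>
      (v p.1 * v' p.2) / (v p.2 * v' p.1)) :=
    Set.Finite.bddAbove (Set.finite_range _)
  set t := ⨆ p : Fin m × Fin m, (v p.1 * v' p.2) / (v p.2 * v' p.1) with htdef
  have ht1 : 1 ≤ t := by
    have h := le_ciSup hbddt (j0, j0)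
    rw [div_self (ne_of_gt (mul_pos (hv j0) (hv' j0)))] at h
    exact h
  have ht0 : (0:ℝ) < t := by linarith
  set x := Real.sqrt t with hxdef
  have hx : 1 ≤ x := by
    rw [hxdef, show (1:ℝ) = Real.sqrt 1 by simp]
    exact Real.sqrt_le_sqrt ht1
  have hx2 : x^2 = t := Real.sq_sqrt (by linarith)
  -- minimizer of v j / v' j
  obtain ⟨jm, -, hjm⟩ := Finset.exists_min_image Finset.univ (fun j => v j / v' j)
    Finset.univ_nonempty
  have hρ : 0 < v jm / v' jm := div_pos (hv jm) (hv' jm)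
  have hr1 : ∀ j, v jm / v' jm ≤ v j / v' j := fun j => hjm j (Finset.mem_univ j)
  have hr2 : ∀ j, v j / v' j ≤ x^2 * (v jm / v' jm) := by
    intro j
    have h := le_ciSup hbddt (j, jm)
    rw [div_le_iff₀ (mul_pos (hv jm) (hv' j))] at h
    rw [hx2, ← mul_div_assoc, div_le_div_iff₀ (hv' j) (hv' jm)]
    nlinarith [h]
  -- pairwise bound
  have pair : ∀ i i' : Fin n,
      (∑ j, K i j * v j) * (∑ j, K i' j * v' j) * (x + y)^2
        ≤ (1 + x*y)^2 * ((∑ j, K i' j * v j) * (∑ j, K i j * v' j)) := by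
    intro i i'
    have hηAB : ∀ j k, (K i j * v' j) * (K i' k * v' k)
        ≤ y^2 * ((K i k * v' k) * (K i' j * v' j)) := by
      intro j k
      have h := hηpair i i' j k
      rw [hy2]
      calc (K i j * v' j) * (K i' k * v' k) = (K i j * K i' k) * (v' j * v' k) := by ring
        _ ≤ (etaK K * (K i' j * K i k)) * (v' j * v' k) :=
            mul_le_mul_of_nonneg_right h (mul_pos (hv' j) (hv' k)).le
        _ = etaK K * ((K i k * v' k) * (K i' j * v' j)) := by ring
    have hsb := sum_bound (fun j => K i j * v' j) (fun j => K i' j * v' j)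
      (fun j => v j / v' j) (fun j => mul_pos (hK i j) (hv' j))
      (fun j => mul_pos (hK i' j) (hv' j)) hρ hx hy hr1 hr2 hηAB
    have ee : ∀ (w : Fin m → ℝ), (∑ j, (w j * v' j) * (v j / v' j)) = ∑ j, w j * v j := by
      intro w
      refine Finset.sum_congr rfl fun j _ => ?_
      rw [mul_assoc, mul_comm (v' j), div_mul_cancel₀ _ (hv' j).ne']
    rwa [ee (fun j => K i j), ee (fun j => K i' j)] at hsb
  -- the exp/log step
  have hxy0 : (0:ℝ) < 1 + x*y := by nlinarith
  have hxys : (0:ℝ) < x + y := by linarith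
  have hlogt : Real.log t = 2 * Real.log x := by
    rw [← hx2, Real.log_pow]; norm_num
  have big : (1 + x*y)^2 ≤ t ^ (lamK K) * (x + y)^2 := by
    rw [Real.rpow_def_of_pos ht0]
    rw [← Real.exp_log (show (0:ℝ) < (1+x*y)^2 by positivity),
      ← Real.exp_log (show (0:ℝ) < (x+y)^2 by positivity), ← Real.exp_add]
    apply Real.exp_le_exp.2
    rw [Real.log_pow, Real.log_pow, hlam, hlogt]
    have := log_core hy hx
    push_cast
    nlinarith [this]
  -- positivity of the image sums
  have hKv : ∀ i : Fin n, 0 < ∑ j, K i j * v j := fun i =>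
    Finset.sum_pos (fun j _ => mul_pos (hK i j) (hv j)) Finset.univ_nonempty
  have hKv' : ∀ i : Fin n, 0 < ∑ j, K i j * v' j := fun i =>
    Finset.sum_pos (fun j _ => mul_pos (hK i j) (hv' j)) Finset.univ_nonempty
  -- combine
  have hT : ∀ p : Fin n × Fin n,
      ((∑ j, K p.1 j * v j) * (∑ j, K p.2 j * v' j))
        / ((∑ j, K p.2 j * v j) * (∑ j, K p.1 j * v' j)) ≤ t ^ (lamK K) := by
    intro p
    rw [div_le_iff₀ (mul_pos (hKv p.2) (hKv' p.1))]
    refine le_of_mul_le_mul_right ?_ (show (0:ℝ) < (x + y)^2 by positivity)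
    calc (∑ j, K p.1 j * v j) * (∑ j, K p.2 j * v' j) * (x + y)^2
        ≤ (1 + x*y)^2 * ((∑ j, K p.2 j * v j) * (∑ j, K p.1 j * v' j)) := pair p.1 p.2
      _ ≤ (t ^ (lamK K) * (x + y)^2) * ((∑ j, K p.2 j * v j) * (∑ j, K p.1 j * v' j)) :=
          mul_le_mul_of_nonneg_right big (mul_pos (hKv p.2) (hKv' p.1)).le
      _ = t ^ (lamK K) * ((∑ j, K p.2 j * v j) * (∑ j, K p.1 j * v' j)) * (x + y)^2 := by
          ring
  have hbddH : BddAbove (Set.range fun p : Fin n × Fin n =>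
      ((∑ j, K p.1 j * v j) * (∑ j, K p.2 j * v' j))
        / ((∑ j, K p.2 j * v j) * (∑ j, K p.1 j * v' j))) :=
    Set.Finite.bddAbove (Set.finite_range _)
  have hH1 : (1:ℝ) ≤ ⨆ p : Fin n × Fin n,
      ((∑ j, K p.1 j * v j) * (∑ j, K p.2 j * v' j))
        / ((∑ j, K p.2 j * v j) * (∑ j, K p.1 j * v' j)) := by
    have h := le_ciSup hbddH (i0, i0)
    rw [div_self (ne_of_gt (mul_pos (hKv i0) (hKv' i0)))] at h
    exact h
  have hHle : (⨆ p : Fin n × Fin n,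
      ((∑ j, K p.1 j * v j) * (∑ j, K p.2 j * v' j))
        / ((∑ j, K p.2 j * v j) * (∑ j, K p.1 j * v' j))) ≤ t ^ (lamK K) :=
    ciSup_le hT
  show Real.log _ ≤ lamK K * Real.log t
  calc Real.log (⨆ p : Fin n × Fin n,
        ((fun i => ∑ j, K i j * v j) p.1 * (fun i => ∑ j, K i j * v' j) p.2)
          / ((fun i => ∑ j, K i j * v j) p.2 * (fun i => ∑ j, K i j * v' j) p.1))
      = Real.log (⨆ p : Fin n × Fin n,
        ((∑ j, K p.1 j * v j) * (∑ j, K p.2 j * v' j))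
          / ((∑ j, K p.2 j * v j) * (∑ j, K p.1 j * v' j))) := rfl
    _ ≤ Real.log (t ^ (lamK K)) := Real.log_le_log (by linarith) hHle
    _ = lamK K * Real.log t := Real.log_rpow ht0 _
end

section
/- Let K be an n×m matrix with strictly positive entries, and let u, u* ∈ ℝ^n and v, v* ∈ ℝ^m be strictly positive vectors. Set P = diag(u) K diag(v) and P* = diag(u*) K diag(v*), and suppose P and P* have the same row sums, i.e., Σ_j P_{ij} = Σ_j P*_{ij} for every i. Then max_{i,j} | log P_{ij} - log P*_{ij} | ≤ d_H(u, u*) + d_H(v, v*), where d_H is the Hilbert projective metric. -/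
open BigOperators

lemma aux_sum (m : ℕ) (K : Fin m → ℝ) (hK : ∀ k, 0 < K k)
    (a b : Fin m → ℝ) (ha : ∀ k, 0 < a k) (hb : ∀ k, 0 < b k) (j : Fin m) :
    (∑ k, K k * b k) * a j ≤
      (⨆ p : Fin m × Fin m, (a p.1 * b p.2) / (a p.2 * b p.1)) *
        ((∑ k, K k * a k) * b j) := by
  have hbdd : BddAbove (Set.range fun p : Fin m × Fin m => (a p.1 * b p.2) / (a p.2 * b p.1)) :=
    (Set.finite_range _).bddAbove
  set S : ℝ := ⨆ p : Fin m × Fin m, (a p.1 * b p.2) / (a p.2 * b p.1) with hS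
  have e1 : (∑ k, K k * b k) * a j = ∑ k, K k * b k * a j := Finset.sum_mul _ _ _
  have e2 : S * ((∑ k, K k * a k) * b j) = ∑ k, S * (K k * a k * b j) := by
    rw [Finset.sum_mul, Finset.mul_sum]
  rw [e1, e2]
  apply Finset.sum_le_sum
  intro k _
  have hterm : (a j * b k) / (a k * b j) ≤ S := le_ciSup hbdd (j, k)
  have h1 : 0 < a k * b j := mul_pos (ha k) (hb j)
  have h2 : a j * b k ≤ S * (a k * b j) := by
    rw [div_le_iff₀ h1] at hterm; linarith
  calc K k * b k * a j = K k * (a j * b k) := by ring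
    _ ≤ K k * (S * (a k * b j)) := mul_le_mul_of_nonneg_left h2 (hK k).le
    _ = S * (K k * a k * b j) := by ring

/-- for two positively scaled plans `P = diag(u) K diag(v)` and
`P* = diag(u*) K diag(v*)` with equal row sums, the sup-norm distance of the
log-plans is bounded by `d_H(u, u*) + d_H(v, v*)`. -/
theorem log_plan_bound
    (n m : ℕ) (hn : 0 < n) (hm : 0 < m)
    (K : Matrix (Fin n) (Fin m) ℝ) (hK : ∀ i j, 0 < K i j)
    (u ustar : Fin n → ℝ) (v vstar : Fin m → ℝ)
    (hu : ∀ i, 0 < u i) (hustar : ∀ i, 0 < ustar i)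
    (hv : ∀ j, 0 < v j) (hvstar : ∀ j, 0 < vstar j)
    (P Pstar : Matrix (Fin n) (Fin m) ℝ)
    (hP : ∀ i j, P i j = u i * K i j * v j)
    (hPstar : ∀ i j, Pstar i j = ustar i * K i j * vstar j)
    (hrow : ∀ i, ∑ j, P i j = ∑ j, Pstar i j) :
    ∀ i j, |Real.log (P i j) - Real.log (Pstar i j)|
      ≤ hilbertDist u ustar + hilbertDist v vstar := by
  intro i j
  haveI : Nonempty (Fin m) := ⟨⟨0, hm⟩⟩
  set Sv : ℝ := ⨆ p : Fin m × Fin m, (v p.1 * vstar p.2) / (v p.2 * vstar p.1) with hSv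
  have hPpos : 0 < P i j := by
    rw [hP]; exact mul_pos (mul_pos (hu i) (hK i j)) (hv j)
  have hPspos : 0 < Pstar i j := by
    rw [hPstar]; exact mul_pos (mul_pos (hustar i) (hK i j)) (hvstar j)
  have hbdd : BddAbove (Set.range fun p : Fin m × Fin m => (v p.1 * vstar p.2) / (v p.2 * vstar p.1)) :=
    (Set.finite_range _).bddAbove
  have hSv1 : (1 : ℝ) ≤ Sv := by
    have j0 : Fin m := ⟨0, hm⟩
    have := le_ciSup hbdd (j0, j0)
    simpa [div_self (ne_of_gt (mul_pos (hv j0) (hvstar j0)))] using this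
  have hSvpos : 0 < Sv := lt_of_lt_of_le one_pos hSv1
  have hb2 : BddAbove (Set.range fun p : Fin m × Fin m => (vstar p.1 * v p.2) / (vstar p.2 * v p.1)) :=
    (Set.finite_range _).bddAbove
  have hswap : (⨆ p : Fin m × Fin m, (vstar p.1 * v p.2) / (vstar p.2 * v p.1)) = Sv := by
    apply le_antisymm
    · apply ciSup_le
      intro p
      have := le_ciSup hbdd (p.2, p.1)
      simpa [mul_comm] using this
    · apply ciSup_le
      intro p
      have := le_ciSup hb2 (p.2, p.1)
      simpa [mul_comm] using this
  have hrow' : u i * (∑ k, K i k * v k) = ustar i * (∑ k, K i k * vstar k) := by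
    have := hrow i
    simp only [hP, hPstar] at this
    rw [Finset.mul_sum, Finset.mul_sum]
    convert this using 2 <;> ring
  set A : ℝ := ∑ k, K i k * v k with hA
  set B : ℝ := ∑ k, K i k * vstar k with hB
  have hApos : 0 < A := Finset.sum_pos (fun k _ => mul_pos (hK i k) (hv k)) ⟨j, Finset.mem_univ j⟩
  have hBpos : 0 < B := Finset.sum_pos (fun k _ => mul_pos (hK i k) (hvstar k)) ⟨j, Finset.mem_univ j⟩
  have key1 : B * v j ≤ Sv * (A * vstar j) := aux_sum m (K i) (hK i) v vstar hv hvstar j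
  have fwd : P i j ≤ Sv * Pstar i j := by
    rw [hP, hPstar]
    have h1 : A * (u i * K i j * v j) ≤ A * (Sv * (ustar i * K i j * vstar j)) := by
      calc A * (u i * K i j * v j) = (ustar i * K i j) * (B * v j) := by
            linear_combination (K i j * v j) * hrow'
        _ ≤ (ustar i * K i j) * (Sv * (A * vstar j)) :=
            mul_le_mul_of_nonneg_left key1 (mul_pos (hustar i) (hK i j)).le
        _ = A * (Sv * (ustar i * K i j * vstar j)) := by ring
    exact le_of_mul_le_mul_left h1 hApos
  have key2 : A * vstar j ≤ Sv * (B * v j) := by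
    have := aux_sum m (K i) (hK i) vstar v hvstar hv j
    rwa [hswap] at this
  have bwd : Pstar i j ≤ Sv * P i j := by
    rw [hP, hPstar]
    have h1 : B * (ustar i * K i j * vstar j) ≤ B * (Sv * (u i * K i j * v j)) := by
      calc B * (ustar i * K i j * vstar j) = (u i * K i j) * (A * vstar j) := by
            linear_combination (-(K i j * vstar j)) * hrow'
        _ ≤ (u i * K i j) * (Sv * (B * v j)) :=
            mul_le_mul_of_nonneg_left key2 (mul_pos (hu i) (hK i j)).le
        _ = B * (Sv * (u i * K i j * v j)) := by ring
    exact le_of_mul_le_mul_left h1 hBpos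
  have hDu : 0 ≤ hilbertDist u ustar := by
    rw [hilbertDist]
    apply Real.log_nonneg
    have hbddu : BddAbove (Set.range fun p : Fin n × Fin n => (u p.1 * ustar p.2) / (u p.2 * ustar p.1)) :=
      (Set.finite_range _).bddAbove
    have := le_ciSup hbddu (i, i)
    simpa [div_self (ne_of_gt (mul_pos (hu i) (hustar i)))] using this
  have hDv : hilbertDist v vstar = Real.log Sv := by rw [hilbertDist]
  have hlog1 : Real.log (P i j) - Real.log (Pstar i j) ≤ Real.log Sv := by
    have := Real.log_le_log hPpos fwd
    rw [Real.log_mul (ne_of_gt hSvpos) (ne_of_gt hPspos)] at this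
    linarith
  have hlog2 : Real.log (Pstar i j) - Real.log (P i j) ≤ Real.log Sv := by
    have := Real.log_le_log hPspos bwd
    rw [Real.log_mul (ne_of_gt hSvpos) (ne_of_gt hPpos)] at this
    linarith
  rw [abs_le]
  constructor <;> linarith
end

section
/- Let ε > 0, let μ ∈ ℝ^n and ν ∈ ℝ^m be strictly positive probability vectors (Σ_i μ_i = 1, Σ_j ν_j = 1), and let C be an n×m real matrix. Then the entropic optimal transport problem min over nonnegative n×m matrices P with P𝟙 = μ and Pᵀ𝟙 = ν of Σ_{i,j} C_{ij} P_{ij} + ε Σ_{i,j} P_{ij} log( P_{ij} / ( μ_i ν_j ) ) equals the dual value sup over f ∈ ℝ^n, g ∈ ℝ^m of Σ_i f_i μ_i + Σ_j g_j ν_j - ε Σ_{i,j} exp( ( f_i + g_j - C_{ij} ) / ε ) μ_i ν_j + ε, and both the minimum and the supremum are attained. -/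
open BigOperators

noncomputable def eotG (n m : ℕ) (ε : ℝ) (μ : Fin n → ℝ) (ν : Fin m → ℝ)
    (C : Matrix (Fin n) (Fin m) ℝ) (P : Matrix (Fin n) (Fin m) ℝ) : ℝ :=
  ∑ i, ∑ j, (C i j * P i j
    + ε * (P i j * Real.log (P i j) - P i j * Real.log (μ i * ν j)))


lemma entropy_dual_ineq (x c y : ℝ) (hx : 0 ≤ x) (hc : 0 < c) :
    x * y + x ≤ x * Real.log (x / c) + c * Real.exp y := by
  rcases hx.eq_or_lt with h | h
  · simp [← h]; positivity
  · have hxc : 0 < x / c := div_pos h hc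
    have key : (y - Real.log (x / c)) + 1 ≤ Real.exp (y - Real.log (x / c)) :=
      Real.add_one_le_exp _
    have h2 : x * ((y - Real.log (x / c)) + 1) ≤ x * Real.exp (y - Real.log (x / c)) :=
      mul_le_mul_of_nonneg_left key h.le
    have h3 : x * Real.exp (y - Real.log (x / c)) = c * Real.exp y := by
      rw [Real.exp_sub, Real.exp_log hxc]; field_simp
    rw [h3] at h2; nlinarith [h2]

lemma eot_weak_duality
    (n m : ℕ) (ε : ℝ) (hε : 0 < ε)
    (μ : Fin n → ℝ) (ν : Fin m → ℝ)
    (hμ : ∀ i, 0 < μ i) (hν : ∀ j, 0 < ν j)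
    (hμ1 : ∑ i, μ i = 1)
    (C : Matrix (Fin n) (Fin m) ℝ)
    (P : Matrix (Fin n) (Fin m) ℝ)
    (hP0 : ∀ i j, 0 ≤ P i j) (hPr : ∀ i, ∑ j, P i j = μ i) (hPc : ∀ j, ∑ i, P i j = ν j)
    (f : Fin n → ℝ) (g : Fin m → ℝ) :
    (∑ i, f i * μ i) + (∑ j, g j * ν j)
      - ε * (∑ i, ∑ j, Real.exp ((f i + g j - C i j) / ε) * (μ i * ν j)) + ε
    ≤ (∑ i, ∑ j, C i j * P i j)
      + ε * ∑ i, ∑ j, P i j * Real.log (P i j / (μ i * ν j)) := by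
  have key : ∀ i ∈ Finset.univ, ∀ j ∈ (Finset.univ : Finset (Fin m)),
      P i j * ((f i + g j - C i j) / ε) + P i j
        ≤ P i j * Real.log (P i j / (μ i * ν j))
          + (μ i * ν j) * Real.exp ((f i + g j - C i j) / ε) := by
    intro i _ j _
    exact entropy_dual_ineq _ _ _ (hP0 i j) (mul_pos (hμ i) (hν j))
  have hsum : ∑ i, ∑ j, (P i j * ((f i + g j - C i j) / ε) + P i j)
      ≤ ∑ i, ∑ j, (P i j * Real.log (P i j / (μ i * ν j))
          + (μ i * ν j) * Real.exp ((f i + g j - C i j) / ε)) :=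
    Finset.sum_le_sum fun i hi => Finset.sum_le_sum (key i hi)
  have hP1 : ∑ i, ∑ j, P i j = 1 := by
    rw [← hμ1]; exact Finset.sum_congr rfl fun i _ => hPr i
  have hfP : ∑ i, ∑ j, P i j * f i = ∑ i, f i * μ i := by
    refine Finset.sum_congr rfl fun i _ => ?_
    rw [← Finset.sum_mul, hPr i, mul_comm]
  have hgP : ∑ i, ∑ j, P i j * g j = ∑ j, g j * ν j := by
    rw [Finset.sum_comm]
    refine Finset.sum_congr rfl fun j _ => ?_
    rw [← Finset.sum_mul, hPc j, mul_comm]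
  have hA : ∑ i, ∑ j, P i j * ((f i + g j - C i j) / ε)
      = ((∑ i, f i * μ i) + (∑ j, g j * ν j) - ∑ i, ∑ j, C i j * P i j) / ε := by
    have hA' : ∑ i, ∑ j, (P i j * f i + P i j * g j - C i j * P i j)
        = (∑ i, f i * μ i) + (∑ j, g j * ν j) - ∑ i, ∑ j, C i j * P i j := by
      simp only [Finset.sum_sub_distrib, Finset.sum_add_distrib, hfP, hgP]
    calc ∑ i, ∑ j, P i j * ((f i + g j - C i j) / ε)
        = ∑ i, ∑ j, (P i j * f i + P i j * g j - C i j * P i j) / ε := by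
          refine Finset.sum_congr rfl fun i _ => Finset.sum_congr rfl fun j _ => ?_
          field_simp
      _ = (∑ i, ∑ j, (P i j * f i + P i j * g j - C i j * P i j)) / ε := by
          rw [Finset.sum_div]
          exact Finset.sum_congr rfl fun i _ => (Finset.sum_div _ _ _).symm
      _ = ((∑ i, f i * μ i) + (∑ j, g j * ν j) - ∑ i, ∑ j, C i j * P i j) / ε := by
          rw [hA']
  have hE : ∑ i, ∑ j, ((μ i * ν j) * Real.exp ((f i + g j - C i j) / ε))
      = ∑ i, ∑ j, Real.exp ((f i + g j - C i j) / ε) * (μ i * ν j) := by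
    refine Finset.sum_congr rfl fun i _ => Finset.sum_congr rfl fun j _ => ?_
    ring
  simp only [Finset.sum_add_distrib] at hsum
  rw [hA, hP1, hE] at hsum
  set S := (∑ i, f i * μ i) + (∑ j, g j * ν j)
  set T := ∑ i, ∑ j, C i j * P i j
  set L := ∑ i, ∑ j, P i j * Real.log (P i j / (μ i * ν j))
  set E := ∑ i, ∑ j, Real.exp ((f i + g j - C i j) / ε) * (μ i * ν j)
  have := mul_le_mul_of_nonneg_left hsum hε.le
  rw [mul_add, mul_div_cancel₀ _ (ne_of_gt hε)] at this
  nlinarith [this]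

section
variable (n m : ℕ) (ε : ℝ) (μ : Fin n → ℝ) (ν : Fin m → ℝ) (C : Matrix (Fin n) (Fin m) ℝ)


lemma eotG_eq (hμ : ∀ i, 0 < μ i) (hν : ∀ j, 0 < ν j)
    (P : Matrix (Fin n) (Fin m) ℝ) (h0 : ∀ i j, 0 ≤ P i j) :
    eotG n m ε μ ν C P
      = (∑ i, ∑ j, C i j * P i j)
        + ε * ∑ i, ∑ j, P i j * Real.log (P i j / (μ i * ν j)) := by
  have hpt : ∀ i j, P i j * Real.log (P i j) - P i j * Real.log (μ i * ν j)
      = P i j * Real.log (P i j / (μ i * ν j)) := by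
    intro i j
    rcases (h0 i j).eq_or_lt with h | h
    · simp [← h]
    · rw [Real.log_div (ne_of_gt h) (ne_of_gt (mul_pos (hμ i) (hν j)))]; ring
  unfold eotG
  simp only [hpt]
  rw [Finset.mul_sum]
  rw [← Finset.sum_add_distrib]
  refine Finset.sum_congr rfl fun i _ => ?_
  rw [Finset.mul_sum, ← Finset.sum_add_distrib]

lemma eotG_continuous : Continuous (eotG n m ε μ ν C) := by
  refine continuous_finset_sum _ fun i _ => continuous_finset_sum _ fun j _ => ?_
  have he : Continuous fun P : Matrix (Fin n) (Fin m) ℝ => P i j :=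
    continuous_apply_apply i j
  exact (continuous_const.mul he).add
    (continuous_const.mul ((Real.continuous_mul_log.comp he).sub (he.mul continuous_const)))

lemma eot_exists_min (hε : 0 < ε)
    (hμ : ∀ i, 0 < μ i) (hν : ∀ j, 0 < ν j)
    (hμ1 : ∑ i, μ i = 1) (hν1 : ∑ j, ν j = 1) :
    ∃ P : Matrix (Fin n) (Fin m) ℝ,
      ((∀ i j, 0 ≤ P i j) ∧ (∀ i, ∑ j, P i j = μ i) ∧ (∀ j, ∑ i, P i j = ν j)) ∧
      ∀ Q : Matrix (Fin n) (Fin m) ℝ,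
        ((∀ i j, 0 ≤ Q i j) ∧ (∀ i, ∑ j, Q i j = μ i) ∧ (∀ j, ∑ i, Q i j = ν j)) →
        eotG n m ε μ ν C P ≤ eotG n m ε μ ν C Q := by
  set Feas : Set (Matrix (Fin n) (Fin m) ℝ) :=
    {P | (∀ i j, 0 ≤ P i j) ∧ (∀ i, ∑ j, P i j = μ i) ∧ (∀ j, ∑ i, P i j = ν j)} with hFeas
  have hne : Feas.Nonempty := by
    refine ⟨fun i j => μ i * ν j, fun i j => (mul_pos (hμ i) (hν j)).le, fun i => ?_, fun j => ?_⟩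
    · rw [← Finset.mul_sum, hν1, mul_one]
    · rw [← Finset.sum_mul, hμ1, one_mul]
  have hKc : IsCompact
      (Set.univ.pi fun _ : Fin n => Set.univ.pi fun _ : Fin m => Set.Icc (0:ℝ) 1
        : Set (Matrix (Fin n) (Fin m) ℝ)) :=
    isCompact_univ_pi fun _ => isCompact_univ_pi fun _ => isCompact_Icc
  have hsub : Feas ⊆ (Set.univ.pi fun _ : Fin n => Set.univ.pi fun _ : Fin m =>
      Set.Icc (0:ℝ) 1) := by
    rintro P ⟨h0, hr, _⟩ i _ j _
    refine ⟨h0 i j, ?_⟩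
    have h1 : P i j ≤ μ i := by
      rw [← hr i]
      exact Finset.single_le_sum (fun j _ => h0 i j) (Finset.mem_univ j)
    have h2 : μ i ≤ 1 := by
      rw [← hμ1]
      exact Finset.single_le_sum (fun i _ => (hμ i).le) (Finset.mem_univ i)
    exact h1.trans h2
  have hclosed : IsClosed Feas := by
    have e1 : Feas = (⋂ i, ⋂ j, {P : Matrix (Fin n) (Fin m) ℝ | 0 ≤ P i j})
        ∩ ((⋂ i, {P : Matrix (Fin n) (Fin m) ℝ | ∑ j, P i j = μ i})
          ∩ (⋂ j, {P : Matrix (Fin n) (Fin m) ℝ | ∑ i, P i j = ν j})) := by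
      ext P; simp [hFeas, Set.mem_iInter]
    rw [e1]
    refine IsClosed.inter ?_ (IsClosed.inter ?_ ?_)
    · exact isClosed_iInter fun i => isClosed_iInter fun j =>
        isClosed_le continuous_const (continuous_apply_apply i j)
    · exact isClosed_iInter fun i =>
        isClosed_eq (continuous_finset_sum _ fun j _ => continuous_apply_apply i j)
          continuous_const
    · exact isClosed_iInter fun j =>
        isClosed_eq (continuous_finset_sum _ fun i _ => continuous_apply_apply i j)
          continuous_const
  have hFc : IsCompact Feas := hKc.of_isClosed_subset hclosed hsub
  obtain ⟨P, hPmem, hmin⟩ :=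
    hFc.exists_isMinOn hne (eotG_continuous n m ε μ ν C).continuousOn
  exact ⟨P, hPmem, fun Q hQ => hmin hQ⟩

end


lemma eot_min_pos (n m : ℕ) (ε : ℝ) (hε : 0 < ε)
    (μ : Fin n → ℝ) (ν : Fin m → ℝ)
    (hμ : ∀ i, 0 < μ i) (hν : ∀ j, 0 < ν j)
    (hμ1 : ∑ i, μ i = 1) (hν1 : ∑ j, ν j = 1)
    (C : Matrix (Fin n) (Fin m) ℝ)
    (P : Matrix (Fin n) (Fin m) ℝ)
    (hP0 : ∀ i j, 0 ≤ P i j) (hPr : ∀ i, ∑ j, P i j = μ i) (hPc : ∀ j, ∑ i, P i j = ν j)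
    (hmin : ∀ Q : Matrix (Fin n) (Fin m) ℝ,
        ((∀ i j, 0 ≤ Q i j) ∧ (∀ i, ∑ j, Q i j = μ i) ∧ (∀ j, ∑ i, Q i j = ν j)) →
        eotG n m ε μ ν C P ≤ eotG n m ε μ ν C Q) :
    ∀ a b, 0 < P a b := by
  intro a b
  by_contra hcon
  have hab : P a b = 0 := le_antisymm (not_lt.1 hcon) (hP0 a b)
  -- the interpolated coupling
  set Pt : ℝ → Matrix (Fin n) (Fin m) ℝ :=
    fun t => fun i j => (1 - t) * P i j + t * (μ i * ν j) with hPt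
  -- per-entry slope constant
  set K : Fin n → Fin m → ℝ := fun i j =>
    C i j * (μ i * ν j - P i j)
      - ε * ((μ i * ν j - P i j) * Real.log (μ i * ν j))
      + ε * ((μ i * ν j) * Real.log (μ i * ν j) - P i j * Real.log (P i j)) with hK
  have hq : 0 < μ a * ν b := mul_pos (hμ a) (hν b)
  -- feasibility of `Pt t` for `t ∈ [0,1]`
  have hfeas : ∀ t : ℝ, 0 ≤ t → t ≤ 1 →
      (∀ i j, 0 ≤ Pt t i j) ∧ (∀ i, ∑ j, Pt t i j = μ i) ∧ (∀ j, ∑ i, Pt t i j = ν j) := by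
    intro t ht0 ht1
    refine ⟨fun i j => ?_, fun i => ?_, fun j => ?_⟩
    · exact add_nonneg (mul_nonneg (by linarith) (hP0 i j))
        (mul_nonneg ht0 (mul_pos (hμ i) (hν j)).le)
    · have : ∑ j, ((1 - t) * P i j + t * (μ i * ν j))
          = (1 - t) * (∑ j, P i j) + t * (μ i * (∑ j, ν j)) := by
        rw [Finset.sum_add_distrib, Finset.mul_sum, Finset.mul_sum, Finset.mul_sum]
      simp only [hPt]
      rw [this, hPr i, hν1]
      ring
    · simp only [hPt]
      rw [Finset.sum_add_distrib, ← Finset.mul_sum, hPc j, ← Finset.mul_sum,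
        ← Finset.sum_mul, hμ1]
      ring
  -- per-entry upper bound for the objective along the segment
  have hentry : ∀ t : ℝ, 0 < t → t ≤ 1 → ∀ i j,
      C i j * Pt t i j + ε * (Pt t i j * Real.log (Pt t i j)
          - Pt t i j * Real.log (μ i * ν j))
      ≤ (C i j * P i j + ε * (P i j * Real.log (P i j) - P i j * Real.log (μ i * ν j)))
        + t * K i j
        + (if i = a then if j = b then ε * (μ a * ν b * (t * Real.log t)) else 0 else 0) := by
    intro t ht0 ht1 i j
    have hc : 0 < μ i * ν j := mul_pos (hμ i) (hν j)
    have hlogt : Real.log t ≤ 0 := Real.log_nonpos ht0.le ht1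
    rcases (hP0 i j).eq_or_lt with hp | hp
    · -- zero entry : exact computation
      have hQ : Pt t i j = t * (μ i * ν j) := by simp only [hPt, ← hp]; ring
      have hlogQ : Real.log (t * (μ i * ν j))
          = Real.log t + Real.log (μ i * ν j) :=
        Real.log_mul (ne_of_gt ht0) (ne_of_gt hc)
      rw [hQ, hlogQ]
      simp only [hK, ← hp]
      by_cases hia : i = a
      · by_cases hjb : j = b
        · subst hia; subst hjb
          simp only [eq_self_iff_true, if_true]
          apply le_of_eq
          ring
        · simp only [if_pos hia, if_neg hjb]
          have hneg : (ε * (μ i * ν j)) * (t * Real.log t) ≤ 0 :=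
            mul_nonpos_of_nonneg_of_nonpos (mul_nonneg hε.le hc.le)
              (mul_nonpos_of_nonneg_of_nonpos ht0.le hlogt)
          nlinarith [hneg]
      · simp only [if_neg hia]
        have hneg : (ε * (μ i * ν j)) * (t * Real.log t) ≤ 0 :=
          mul_nonpos_of_nonneg_of_nonpos (mul_nonneg hε.le hc.le)
            (mul_nonpos_of_nonneg_of_nonpos ht0.le hlogt)
        nlinarith [hneg]
    · -- positive entry : convexity of x ↦ x log x
      have hia : ¬(i = a ∧ j = b) := by
        rintro ⟨rfl, rfl⟩; rw [hab] at hp; exact lt_irrefl 0 hp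
      have hconv := Real.convexOn_mul_log.2 (Set.mem_Ici.2 hp.le) (Set.mem_Ici.2 hc.le)
        (by linarith : (0:ℝ) ≤ 1 - t) ht0.le (by ring)
      simp only [smul_eq_mul] at hconv
      have hconv' : ε * (((1 - t) * P i j + t * (μ i * ν j))
            * Real.log ((1 - t) * P i j + t * (μ i * ν j)))
          ≤ ε * ((1 - t) * (P i j * Real.log (P i j))
            + t * ((μ i * ν j) * Real.log (μ i * ν j))) :=
        mul_le_mul_of_nonneg_left hconv hε.le
      have hif : (if i = a then if j = b then ε * (μ a * ν b * (t * Real.log t)) else 0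
          else 0) = 0 := by
        by_cases h1 : i = a
        · by_cases h2 : j = b
          · exact absurd ⟨h1, h2⟩ hia
          · simp [h1, h2]
        · simp [h1]
      rw [hif]
      simp only [hPt, hK]
      nlinarith [hconv']
  -- summing the entry bounds
  have hsum : ∀ t : ℝ, 0 < t → t ≤ 1 →
      eotG n m ε μ ν C (Pt t)
        ≤ eotG n m ε μ ν C P + t * (∑ i, ∑ j, K i j)
          + ε * (μ a * ν b * (t * Real.log t)) := by
    intro t ht0 ht1
    have h1 : eotG n m ε μ ν C (Pt t)
        ≤ ∑ i, ∑ j, ((C i j * P i j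
            + ε * (P i j * Real.log (P i j) - P i j * Real.log (μ i * ν j)))
          + t * K i j
          + (if i = a then if j = b then ε * (μ a * ν b * (t * Real.log t)) else 0
              else 0)) := by
      unfold eotG
      exact Finset.sum_le_sum fun i _ => Finset.sum_le_sum fun j _ =>
        hentry t ht0 ht1 i j
    refine h1.trans_eq ?_
    rw [Finset.sum_congr rfl (fun i (_ : i ∈ Finset.univ) => Finset.sum_add_distrib),
        Finset.sum_add_distrib,
        Finset.sum_congr rfl (fun i (_ : i ∈ Finset.univ) => Finset.sum_add_distrib),
        Finset.sum_add_distrib]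
    have e1 : ∑ i, ∑ j, t * K i j = t * (∑ i, ∑ j, K i j) := by
      rw [Finset.mul_sum]
      exact Finset.sum_congr rfl fun i _ => (Finset.mul_sum _ _ _).symm
    have e2 : (∑ i : Fin n, ∑ j : Fin m,
        (if i = a then if j = b then ε * (μ a * ν b * (t * Real.log t)) else 0 else 0))
        = ε * (μ a * ν b * (t * Real.log t)) := by
      simp
    rw [e1, e2]
    rfl
  -- choose a small t making the bound negative
  set S := ∑ i, ∑ j, K i j with hS
  set t0 : ℝ := Real.exp (-(|S| + 1) / (ε * (μ a * ν b))) with ht0def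
  have ht0pos : 0 < t0 := Real.exp_pos _
  have ht0le : t0 ≤ 1 := by
    rw [ht0def, Real.exp_le_one_iff]
    apply div_nonpos_of_nonpos_of_nonneg
    · nlinarith [abs_nonneg S]
    · positivity
  have hlogt0 : Real.log t0 = -(|S| + 1) / (ε * (μ a * ν b)) := Real.log_exp _
  have hkey : t0 * S + ε * (μ a * ν b * (t0 * Real.log t0)) < 0 := by
    have hεq : 0 < ε * (μ a * ν b) := mul_pos hε hq
    have : ε * (μ a * ν b * Real.log t0) = -(|S| + 1) := by
      rw [hlogt0]
      field_simp [(hμ a).ne', (hν b).ne']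
    nlinarith [le_abs_self S, ht0pos, this, abs_nonneg S]
  have hlt := hsum t0 ht0pos ht0le
  have := hmin (Pt t0) (hfeas t0 ht0pos.le ht0le)
  linarith


lemma eot_stationarity (n m : ℕ) (ε : ℝ) (hε : 0 < ε)
    (μ : Fin n → ℝ) (ν : Fin m → ℝ)
    (C : Matrix (Fin n) (Fin m) ℝ)
    (P : Matrix (Fin n) (Fin m) ℝ)
    (hpos : ∀ i j, 0 < P i j) (hPr : ∀ i, ∑ j, P i j = μ i) (hPc : ∀ j, ∑ i, P i j = ν j)
    (hmin : ∀ Q : Matrix (Fin n) (Fin m) ℝ,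
        ((∀ i j, 0 ≤ Q i j) ∧ (∀ i, ∑ j, Q i j = μ i) ∧ (∀ j, ∑ i, Q i j = ν j)) →
        eotG n m ε μ ν C P ≤ eotG n m ε μ ν C Q)
    (i0 : Fin n) (j0 : Fin m) (a : Fin n) (b : Fin m) :
    (C a b + ε * (Real.log (P a b) - Real.log (μ a * ν b)))
      + (C i0 j0 + ε * (Real.log (P i0 j0) - Real.log (μ i0 * ν j0)))
    = (C a j0 + ε * (Real.log (P a j0) - Real.log (μ a * ν j0)))
      + (C i0 b + ε * (Real.log (P i0 b) - Real.log (μ i0 * ν b))) := by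
  classical
  set e : Fin n → ℝ := fun i => (if i = a then (1:ℝ) else 0) - (if i = i0 then 1 else 0)
    with he
  set h : Fin m → ℝ := fun j => (if j = b then (1:ℝ) else 0) - (if j = j0 then 1 else 0)
    with hh
  set δ : Fin n → Fin m → ℝ := fun i j => e i * h j with hδ
  have he1 : ∀ i, |e i| ≤ 1 := by
    intro i; simp only [he]; split_ifs <;> norm_num
  have hh1 : ∀ j, |h j| ≤ 1 := by
    intro j; simp only [hh]; split_ifs <;> norm_num
  have hδ1 : ∀ i j, |δ i j| ≤ 1 := by
    intro i j
    rw [hδ]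
    calc |e i * h j| = |e i| * |h j| := abs_mul _ _
      _ ≤ 1 * 1 := mul_le_mul (he1 i) (hh1 j) (abs_nonneg _) zero_le_one
      _ = 1 := mul_one 1
  have hesum : ∑ i, e i = 0 := by
    simp [he, Finset.sum_sub_distrib]
  have hhsum : ∑ j, h j = 0 := by
    simp [hh, Finset.sum_sub_distrib]
  -- lower bound on the entries of P
  set m0 : ℝ := (Finset.univ : Finset (Fin n × Fin m)).inf'
    (Finset.univ_nonempty_iff.mpr ⟨(a, b)⟩) (fun z => P z.1 z.2) with hm0
  have hm0pos : 0 < m0 := by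
    rw [hm0, Finset.lt_inf'_iff]
    exact fun z _ => hpos z.1 z.2
  have hm0le : ∀ i j, m0 ≤ P i j := fun i j =>
    Finset.inf'_le _ (Finset.mem_univ (i, j))
  -- feasibility of the perturbed matrices
  have hfeas : ∀ t : ℝ, |t| ≤ m0 →
      (∀ i j, 0 ≤ P i j + t * δ i j) ∧ (∀ i, ∑ j, (P i j + t * δ i j) = μ i)
        ∧ (∀ j, ∑ i, (P i j + t * δ i j) = ν j) := by
    intro t ht
    refine ⟨fun i j => ?_, fun i => ?_, fun j => ?_⟩
    · have h1 : |t * δ i j| ≤ m0 := by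
        rw [abs_mul]
        calc |t| * |δ i j| ≤ m0 * 1 :=
          mul_le_mul ht (hδ1 i j) (abs_nonneg _) (le_trans (abs_nonneg t) ht)
        _ = m0 := mul_one m0
      have h2 := neg_abs_le (t * δ i j)
      have := hm0le i j
      linarith
    · rw [Finset.sum_add_distrib, hPr i]
      have : ∑ j, t * δ i j = t * e i * ∑ j, h j := by
        rw [Finset.mul_sum]
        refine Finset.sum_congr rfl fun j _ => ?_
        rw [hδ]; ring
      rw [this, hhsum, mul_zero, add_zero]
    · rw [Finset.sum_add_distrib, hPc j]
      have : ∑ i, t * δ i j = t * h j * ∑ i, e i := by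
        rw [Finset.mul_sum]
        refine Finset.sum_congr rfl fun i _ => ?_
        rw [hδ]; ring
      rw [this, hesum, mul_zero, add_zero]
  -- the function along the perturbation line and its derivative at 0
  set X : Fin n → Fin m → ℝ := fun i j =>
    C i j + ε * (Real.log (P i j) + 1 - Real.log (μ i * ν j)) with hX
  have hΦ : HasDerivAt (fun t : ℝ => eotG n m ε μ ν C (fun i j => P i j + t * δ i j))
      (∑ i, ∑ j, δ i j * X i j) 0 := by
    unfold eotG
    refine HasDerivAt.fun_sum fun i _ => HasDerivAt.fun_sum fun j _ => ?_
    have hinner : HasDerivAt (fun t : ℝ => P i j + t * δ i j) (δ i j) 0 := by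
      simpa using ((hasDerivAt_id (0:ℝ)).mul_const (δ i j)).const_add (P i j)
    have hval : P i j + (0:ℝ) * δ i j = P i j := by ring
    have hlog : HasDerivAt (fun x : ℝ => x * Real.log x)
        (Real.log (P i j) + 1) (P i j + (0:ℝ) * δ i j) := by
      rw [hval]; exact Real.hasDerivAt_mul_log (ne_of_gt (hpos i j))
    have hψ : HasDerivAt (fun t : ℝ => (P i j + t * δ i j) * Real.log (P i j + t * δ i j))
        ((Real.log (P i j) + 1) * δ i j) 0 := by have := hlog.comp 0 hinner; exact this
    have hlin : HasDerivAt (fun t : ℝ => (P i j + t * δ i j) * Real.log (μ i * ν j))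
        (δ i j * Real.log (μ i * ν j)) 0 := hinner.mul_const _
    have hC : HasDerivAt (fun t : ℝ => C i j * (P i j + t * δ i j))
        (C i j * δ i j) 0 := hinner.const_mul _
    have := hC.add ((hψ.sub hlin).const_mul ε)
    convert this using 1
    · rfl
    rw [hX]; ring
  -- local minimality at t = 0
  have hloc : IsLocalMin (fun t : ℝ => eotG n m ε μ ν C (fun i j => P i j + t * δ i j)) 0 := by
    rw [IsLocalMin, IsMinFilter]
    rw [Metric.eventually_nhds_iff]
    refine ⟨m0, hm0pos, fun t ht => ?_⟩
    rw [Real.dist_eq, sub_zero] at ht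
    have h0 : (fun i j => P i j + (0:ℝ) * δ i j) = P := by
      funext i j; ring
    rw [h0]
    exact hmin _ (hfeas t ht.le)
  have hderiv0 : (∑ i, ∑ j, δ i j * X i j) = 0 := hloc.hasDerivAt_eq_zero hΦ
  -- compute the double sum
  have hinner : ∀ (Y : Fin m → ℝ), ∑ j, h j * Y j = Y b - Y j0 := by
    intro Y
    simp [hh, sub_mul, Finset.sum_sub_distrib, ite_mul, Finset.sum_ite_eq']
  have houter : ∀ (Z : Fin n → ℝ), ∑ i, e i * Z i = Z a - Z i0 := by
    intro Z
    simp [he, sub_mul, Finset.sum_sub_distrib, ite_mul, Finset.sum_ite_eq']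
  have hcalc : ∑ i, ∑ j, δ i j * X i j
      = (X a b - X a j0) - (X i0 b - X i0 j0) := by
    have : ∀ i, ∑ j, δ i j * X i j = e i * ((X i b) - (X i j0)) := by
      intro i
      rw [← hinner (fun j => X i j)]
      rw [Finset.mul_sum]
      refine Finset.sum_congr rfl fun j _ => ?_
      rw [hδ]; ring
    rw [Finset.sum_congr rfl fun i _ => this i]
    exact houter (fun i => X i b - X i j0)
  rw [hcalc] at hderiv0
  simp only [hX] at hderiv0
  linarith

/-- discrete strong duality for ε-entropy-regularized optimal
transport: the primal minimum over couplings with marginals `μ, ν` equals the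
dual supremum over potentials `(f, g)`, and both are attained. -/
theorem eot_strong_duality
    (n m : ℕ) (ε : ℝ) (hε : 0 < ε)
    (μ : Fin n → ℝ) (ν : Fin m → ℝ)
    (hμ : ∀ i, 0 < μ i) (hν : ∀ j, 0 < ν j)
    (hμ1 : ∑ i, μ i = 1) (hν1 : ∑ j, ν j = 1)
    (C : Matrix (Fin n) (Fin m) ℝ) :
    ∃ p : ℝ,
      IsLeast {x : ℝ | ∃ P : Matrix (Fin n) (Fin m) ℝ,
          (∀ i j, 0 ≤ P i j) ∧ (∀ i, ∑ j, P i j = μ i) ∧ (∀ j, ∑ i, P i j = ν j) ∧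
          x = (∑ i, ∑ j, C i j * P i j)
            + ε * ∑ i, ∑ j, P i j * Real.log (P i j / (μ i * ν j))} p ∧
      IsGreatest {x : ℝ | ∃ (f : Fin n → ℝ) (g : Fin m → ℝ),
          x = (∑ i, f i * μ i) + (∑ j, g j * ν j)
            - ε * (∑ i, ∑ j, Real.exp ((f i + g j - C i j) / ε) * (μ i * ν j))
            + ε} p := by
  classical
  have hn : n ≠ 0 := by rintro rfl; simp at hμ1
  have hm : m ≠ 0 := by rintro rfl; simp at hν1
  set i0 : Fin n := ⟨0, Nat.pos_of_ne_zero hn⟩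
  set j0 : Fin m := ⟨0, Nat.pos_of_ne_zero hm⟩
  obtain ⟨P, ⟨hP0, hPr, hPc⟩, hmin⟩ := eot_exists_min n m ε μ ν C hε hμ hν hμ1 hν1
  have hmin' : ∀ Q : Matrix (Fin n) (Fin m) ℝ,
      ((∀ i j, 0 ≤ Q i j) ∧ (∀ i, ∑ j, Q i j = μ i) ∧ (∀ j, ∑ i, Q i j = ν j)) →
      eotG n m ε μ ν C P ≤ eotG n m ε μ ν C Q := hmin
  have hpos : ∀ a b, 0 < P a b :=
    eot_min_pos n m ε hε μ ν hμ hν hμ1 hν1 C P hP0 hPr hPc hmin'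
  -- the dual potentials
  set D : Fin n → Fin m → ℝ := fun i j =>
    C i j + ε * (Real.log (P i j) - Real.log (μ i * ν j)) with hD
  set f : Fin n → ℝ := fun i => D i j0 - D i0 j0 with hf
  set g : Fin m → ℝ := fun j => D i0 j with hg
  have hstat : ∀ i j, f i + g j = D i j := by
    intro i j
    have := eot_stationarity n m ε hε μ ν C P hpos hPr hPc hmin' i0 j0 i j
    simp only [hf, hg, hD]
    linarith
  set p : ℝ := (∑ i, ∑ j, C i j * P i j)
    + ε * ∑ i, ∑ j, P i j * Real.log (P i j / (μ i * ν j)) with hp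
  have hGp : eotG n m ε μ ν C P = p := eotG_eq n m ε μ ν C hμ hν P hP0
  refine ⟨p, ⟨⟨P, hP0, hPr, hPc, rfl⟩, ?_⟩, ⟨⟨f, g, ?_⟩, ?_⟩⟩
  · -- lower bound for the primal set
    rintro x ⟨Q, hQ0, hQr, hQc, rfl⟩
    have := hmin' Q ⟨hQ0, hQr, hQc⟩
    rwa [hGp, eotG_eq n m ε μ ν C hμ hν Q hQ0] at this
  · -- the dual value at (f, g) equals p
    have hfg : ∀ i j, f i + g j - C i j
        = ε * (Real.log (P i j) - Real.log (μ i * ν j)) := by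
      intro i j
      have := hstat i j
      simp only [hD] at this
      linarith
    have hexp : ∀ i j, Real.exp ((f i + g j - C i j) / ε) * (μ i * ν j) = P i j := by
      intro i j
      have hc : 0 < μ i * ν j := mul_pos (hμ i) (hν j)
      rw [hfg i j, mul_div_cancel_left₀ _ (ne_of_gt hε),
        ← Real.log_div (ne_of_gt (hpos i j)) (ne_of_gt hc),
        Real.exp_log (div_pos (hpos i j) hc), div_mul_cancel₀ _ (ne_of_gt hc)]
    have hE1 : ∑ i, ∑ j, Real.exp ((f i + g j - C i j) / ε) * (μ i * ν j) = 1 := by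
      rw [Finset.sum_congr rfl fun i _ => Finset.sum_congr rfl fun j _ => hexp i j]
      rw [Finset.sum_congr rfl fun i (_ : i ∈ Finset.univ) => hPr i]
      exact hμ1
    have hfP : ∑ i, ∑ j, P i j * f i = ∑ i, f i * μ i := by
      refine Finset.sum_congr rfl fun i _ => ?_
      rw [← Finset.sum_mul, hPr i, mul_comm]
    have hgP : ∑ i, ∑ j, P i j * g j = ∑ j, g j * ν j := by
      rw [Finset.sum_comm]
      refine Finset.sum_congr rfl fun j _ => ?_
      rw [← Finset.sum_mul, hPc j, mul_comm]
    have hsplit : ∑ i, ∑ j, (P i j * f i + P i j * g j)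
        = ∑ i, ∑ j, P i j * f i + ∑ i, ∑ j, P i j * g j := by
      rw [← Finset.sum_add_distrib]
      exact Finset.sum_congr rfl fun i _ => Finset.sum_add_distrib
    have hval : (∑ i, f i * μ i) + (∑ j, g j * ν j) = eotG n m ε μ ν C P := by
      rw [← hfP, ← hgP, ← hsplit]
      unfold eotG
      refine Finset.sum_congr rfl fun i _ => Finset.sum_congr rfl fun j _ => ?_
      have := hstat i j
      simp only [hD] at this
      linear_combination P i j * this
    rw [hE1, mul_one, hval, hGp]
    ring
  · -- upper bound for the dual set : weak duality against P
    rintro x ⟨f', g', rfl⟩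
    exact eot_weak_duality n m ε hε μ ν hμ hν hμ1 C P hP0 hPr hPc f' g'
end

section
/- Let ε > 0, let μ ∈ ℝ^n and ν ∈ ℝ^m be strictly positive probability vectors, and let C be an n×m real matrix. Define the dual functional D(f, g) = Σ_i f_i μ_i + Σ_j g_j ν_j - ε Σ_{i,j} exp( ( f_i + g_j - C_{ij} ) / ε ) μ_i ν_j for f ∈ ℝ^n, g ∈ ℝ^m. Suppose (f*, g*) satisfies the Sinkhorn fixed-point (marginal) conditions Σ_j exp( (f*_i + g*_j - C_{ij})/ε ) ν_j = 1 for every i and Σ_i exp( (f*_i + g*_j - C_{ij})/ε ) μ_i = 1 for every j. Then D(f, g) ≤ D(f*, g*) for all f ∈ ℝ^n and g ∈ ℝ^m; i.e., the converged Sinkhorn potentials maximize the dual objective of entropic optimal transport. -/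
open BigOperators

/-- the converged Sinkhorn potentials (satisfying the marginal
fixed-point conditions) maximize the dual objective of entropic optimal
transport. -/
theorem sinkhorn_potentials_maximize_dual
    (n m : ℕ) (ε : ℝ) (hε : 0 < ε)
    (μ : Fin n → ℝ) (ν : Fin m → ℝ)
    (hμ : ∀ i, 0 < μ i) (hν : ∀ j, 0 < ν j)
    (hμ1 : ∑ i, μ i = 1) (hν1 : ∑ j, ν j = 1)
    (C : Matrix (Fin n) (Fin m) ℝ)
    (D : (Fin n → ℝ) → (Fin m → ℝ) → ℝ)
    (hD : ∀ f g, D f g = (∑ i, f i * μ i) + (∑ j, g j * ν j)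
      - ε * ∑ i, ∑ j, Real.exp ((f i + g j - C i j) / ε) * (μ i * ν j))
    (fstar : Fin n → ℝ) (gstar : Fin m → ℝ)
    (hrow : ∀ i, ∑ j, Real.exp ((fstar i + gstar j - C i j) / ε) * ν j = 1)
    (hcol : ∀ j, ∑ i, Real.exp ((fstar i + gstar j - C i j) / ε) * μ i = 1) :
    ∀ f g, D f g ≤ D fstar gstar := by
  intro f g
  set A : Fin n → Fin m → ℝ := fun i j => Real.exp ((fstar i + gstar j - C i j) / ε) with hA
  set B : Fin n → Fin m → ℝ := fun i j => Real.exp ((f i + g j - C i j) / ε) with hB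
  -- pointwise concavity inequality
  have key : ∀ i j, ((f i - fstar i) + (g j - gstar j)) * (A i j * (μ i * ν j))
      ≤ ε * (B i j * (μ i * ν j)) - ε * (A i j * (μ i * ν j)) := by
    intro i j
    set d : ℝ := (f i - fstar i) + (g j - gstar j) with hd
    have h3 : A i j * Real.exp (d / ε) = B i j := by
      rw [hA, hB]
      simp only
      rw [← Real.exp_add]
      congr 1
      field_simp
      ring
    have h2 := Real.add_one_le_exp (d / ε)
    have h1 : A i j * (d / ε + 1) ≤ B i j := by
      calc A i j * (d / ε + 1) ≤ A i j * Real.exp (d / ε) :=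
            mul_le_mul_of_nonneg_left h2 (Real.exp_pos _).le
        _ = B i j := h3
    have hεd : ε * (d / ε) = d := mul_div_cancel₀ d (ne_of_gt hε)
    have h1' : ε * (A i j * (d / ε + 1)) ≤ ε * B i j := mul_le_mul_of_nonneg_left h1 hε.le
    have heq : ε * (A i j * (d / ε + 1)) = A i j * (ε * (d / ε)) + ε * A i j := by ring
    rw [heq, hεd] at h1'
    have h4 : d * A i j ≤ ε * B i j - ε * A i j := by linarith
    have hpos : (0:ℝ) ≤ μ i * ν j := le_of_lt (mul_pos (hμ i) (hν j))
    have := mul_le_mul_of_nonneg_right h4 hpos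
    nlinarith [this]
  have sumkey : ∑ i, ∑ j, ((f i - fstar i) + (g j - gstar j)) * (A i j * (μ i * ν j))
      ≤ ∑ i, ∑ j, (ε * (B i j * (μ i * ν j)) - ε * (A i j * (μ i * ν j))) :=
    Finset.sum_le_sum (fun i _ => Finset.sum_le_sum (fun j _ => key i j))
  have R : ∑ i, ∑ j, (ε * (B i j * (μ i * ν j)) - ε * (A i j * (μ i * ν j)))
      = ε * (∑ i, ∑ j, B i j * (μ i * ν j)) - ε * (∑ i, ∑ j, A i j * (μ i * ν j)) := by
    simp [Finset.sum_sub_distrib, Finset.mul_sum]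
  have L1 : ∀ i, ∑ j, (f i - fstar i) * (A i j * (μ i * ν j)) = (f i - fstar i) * μ i := by
    intro i
    have : ∑ j, (f i - fstar i) * (A i j * (μ i * ν j))
        = (f i - fstar i) * μ i * ∑ j, A i j * ν j := by
      rw [Finset.mul_sum]
      exact Finset.sum_congr rfl (fun j _ => by ring)
    rw [this, hrow i, mul_one]
  have L2 : ∀ j, ∑ i, (g j - gstar j) * (A i j * (μ i * ν j)) = (g j - gstar j) * ν j := by
    intro j
    have : ∑ i, (g j - gstar j) * (A i j * (μ i * ν j))
        = (g j - gstar j) * ν j * ∑ i, A i j * μ i := by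
      rw [Finset.mul_sum]
      exact Finset.sum_congr rfl (fun i _ => by ring)
    rw [this, hcol j, mul_one]
  have L : ∑ i, ∑ j, ((f i - fstar i) + (g j - gstar j)) * (A i j * (μ i * ν j))
      = ∑ i, (f i - fstar i) * μ i + ∑ j, (g j - gstar j) * ν j := by
    have split : ∑ i, ∑ j, ((f i - fstar i) + (g j - gstar j)) * (A i j * (μ i * ν j))
        = ∑ i, ∑ j, (f i - fstar i) * (A i j * (μ i * ν j))
          + ∑ i, ∑ j, (g j - gstar j) * (A i j * (μ i * ν j)) := by
      rw [← Finset.sum_add_distrib]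
      refine Finset.sum_congr rfl (fun i _ => ?_)
      rw [← Finset.sum_add_distrib]
      exact Finset.sum_congr rfl (fun j _ => by ring)
    rw [split]
    congr 1
    · exact Finset.sum_congr rfl (fun i _ => L1 i)
    · rw [Finset.sum_comm]
      exact Finset.sum_congr rfl (fun j _ => L2 j)
  rw [L, R] at sumkey
  have e1 : ∑ i, (f i - fstar i) * μ i = ∑ i, f i * μ i - ∑ i, fstar i * μ i := by
    rw [← Finset.sum_sub_distrib]
    exact Finset.sum_congr rfl (fun i _ => by ring)
  have e2 : ∑ j, (g j - gstar j) * ν j = ∑ j, g j * ν j - ∑ j, gstar j * ν j := by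
    rw [← Finset.sum_sub_distrib]
    exact Finset.sum_congr rfl (fun j _ => by ring)
  rw [e1, e2] at sumkey
  rw [hD, hD]
  linarith [sumkey]
end

section
/- Let X be a metric space, let (Y, ν) be a probability measure space, let c : X × Y → ℝ be bounded and measurable in y for each x, and let g : Y → ℝ be bounded measurable. Define the soft c-transform operator T by T(g)(x) = log ∫_Y exp( -c(x, y) + g(y) ) dν(y). Then for all x, x' ∈ X, | T(g)(x) - T(g)(x') | ≤ sup_{y ∈ Y} | c(x, y) - c(x', y) |. In particular, when X and Y are compact and c is continuous (hence uniformly continuous on X × Y), the family { T(g) : g bounded measurable } is equicontinuous on X. -/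
open MeasureTheory

/-- the soft (entropic) c-transform
`T(g)(x) = log ∫ exp(-c(x,y) + g(y)) dν(y)` satisfies
`|T(g)(x) - T(g)(x')| ≤ sup_y |c(x,y) - c(x',y)|` for bounded measurable data,
which yields equicontinuity of its image when `c` is uniformly continuous. -/
theorem soft_c_transform_equicontinuous
    {X Y : Type*} [MetricSpace X] [MeasurableSpace Y]
    (ν : Measure Y) [IsProbabilityMeasure ν]
    (c : X × Y → ℝ) (M : ℝ)
    (hcb : ∀ x y, |c (x, y)| ≤ M)
    (hcm : ∀ x, Measurable fun y => c (x, y))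
    (g : Y → ℝ) (hgm : Measurable g) (Mg : ℝ) (hgb : ∀ y, |g y| ≤ Mg)
    (T : (Y → ℝ) → X → ℝ)
    (hT : ∀ x, T g x = Real.log (∫ y, Real.exp (-c (x, y) + g y) ∂ν)) :
    ∀ x x', |T g x - T g x'| ≤ ⨆ y, |c (x, y) - c (x', y)| := by
  have hY : Nonempty Y := by
    by_contra h
    rw [not_nonempty_iff] at h
    have : ν Set.univ = 1 := measure_univ
    simp [Set.univ_eq_empty_iff.2 h] at this
  -- integrability
  have hint : ∀ x : X, Integrable (fun y => Real.exp (-c (x, y) + g y)) ν := by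
    intro x
    refine Integrable.mono' (integrable_const (Real.exp (M + Mg)))
      ((Real.measurable_exp.comp ((hcm x).neg.add hgm)).aestronglyMeasurable) ?_
    filter_upwards with y
    rw [Real.norm_eq_abs, Real.abs_exp]
    apply Real.exp_le_exp.2
    have h1 := (abs_le.1 (hcb x y)).1
    have h2 := (abs_le.1 (hgb y)).2
    linarith
  -- positivity of integrals
  have hpos : ∀ x : X, 0 < ∫ y, Real.exp (-c (x, y) + g y) ∂ν := by
    intro x
    have hlb : ∀ y, Real.exp (-(M + Mg)) ≤ Real.exp (-c (x, y) + g y) := by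
      intro y
      apply Real.exp_le_exp.2
      have h1 := (abs_le.1 (hcb x y)).2
      have h2 := (abs_le.1 (hgb y)).1
      linarith
    calc (0 : ℝ) < Real.exp (-(M + Mg)) := Real.exp_pos _
      _ = ∫ _, Real.exp (-(M + Mg)) ∂ν := by simp
      _ ≤ ∫ y, Real.exp (-c (x, y) + g y) ∂ν :=
        integral_mono (integrable_const _) (hint x) hlb
  -- bdd above of sup
  have hbdd : ∀ x x' : X, BddAbove (Set.range fun y => |c (x, y) - c (x', y)|) := by
    intro x x'
    refine ⟨2 * M, ?_⟩
    rintro r ⟨y, rfl⟩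
    have := hcb x y; have := hcb x' y
    calc |c (x, y) - c (x', y)| ≤ |c (x, y)| + |c (x', y)| := abs_sub _ _
      _ ≤ 2 * M := by linarith
  -- the key one-sided estimate
  have key : ∀ x x' : X, T g x - T g x' ≤ ⨆ y, |c (x, y) - c (x', y)| := by
    intro x x'
    set S := ⨆ y, |c (x, y) - c (x', y)| with hS
    have hle : ∀ y, Real.exp (-c (x, y) + g y) ≤
        Real.exp S * Real.exp (-c (x', y) + g y) := by
      intro y
      rw [← Real.exp_add]
      apply Real.exp_le_exp.2
      have hSy : |c (x, y) - c (x', y)| ≤ S := le_ciSup (hbdd x x') y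
      have := (abs_le.1 hSy).1
      linarith
    have hIle : (∫ y, Real.exp (-c (x, y) + g y) ∂ν) ≤
        Real.exp S * ∫ y, Real.exp (-c (x', y) + g y) ∂ν := by
      rw [← integral_const_mul]
      exact integral_mono (hint x) ((hint x').const_mul _) hle
    rw [hT, hT, sub_le_iff_le_add]
    calc Real.log (∫ y, Real.exp (-c (x, y) + g y) ∂ν)
        ≤ Real.log (Real.exp S * ∫ y, Real.exp (-c (x', y) + g y) ∂ν) :=
          Real.log_le_log (hpos x) hIle
      _ = S + Real.log (∫ y, Real.exp (-c (x', y) + g y) ∂ν) := by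
          rw [Real.log_mul (Real.exp_ne_zero _) (ne_of_gt (hpos x')), Real.log_exp]
  intro x x'
  rw [abs_sub_le_iff]
  constructor
  · exact key x x'
  · have h := key x' x
    have heq : (⨆ y, |c (x', y) - c (x, y)|) = ⨆ y, |c (x, y) - c (x', y)| := by
      congr 1; funext y; rw [abs_sub_comm]
    linarith [heq ▸ h]
end
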